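/- arXiv:2405.06456 — 2 statements merged into one kernel-verified Lean document; each statement's English description precedes it below -/
import Mathlib

section
/- Let Δ be a real number with |Δ| ≥ 15, let m, k be positive integers with k ≥ 2, and let y₁, ..., y_k be complex numbers with |y₁| ≥ exp(π√|Δ|) − 2079 and |y_i| ≤ (6/exp(π√|Δ|/2))·|y₁| for all i ≥ 2. Suppose further that (k−1) ≤ (1/π)·√|Δ|·(2 + log|Δ|) and 1 − (6√|Δ|(2 + log|Δ|))/(π·exp(π√|Δ|/2)) > 0. Then |y₁^m + y₂^m + ... + y_k^m| > 0; in particular y₁^m + ... + y_k^m ≠ 0. -/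
open Real Complex Finset

theorem power_sum_nonzero (Δ : ℝ) (hΔ : 15 ≤ |Δ|) (m k : ℕ) (hm : 1 ≤ m)
    (hk : 2 ≤ k) (y : Fin k → ℂ)
    (hy0 : Real.exp (Real.pi * Real.sqrt |Δ|) - 2079 ≤ ‖y ⟨0, by omega⟩‖)
    (hyi : ∀ i : Fin k, i ≠ ⟨0, by omega⟩ →
      ‖y i‖ ≤ (6 / Real.exp (Real.pi * Real.sqrt |Δ| / 2)) *
        ‖y ⟨0, by omega⟩‖)
    (hcard : ((k : ℝ) - 1) ≤ (1 / Real.pi) * Real.sqrt |Δ| * (2 + Real.log |Δ|))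
    (hpos : 0 < 1 - 6 * Real.sqrt |Δ| * (2 + Real.log |Δ|) /
      (Real.pi * Real.exp (Real.pi * Real.sqrt |Δ| / 2))) :
    0 < ‖∑ i, y i ^ m‖ ∧ (∑ i, y i ^ m) ≠ 0 := by
  set z : Fin k := ⟨0, by omega⟩ with hz
  set a : ℝ := ‖y z‖ with haa
  set c : ℝ := 6 / Real.exp (Real.pi * Real.sqrt |Δ| / 2) with hcc
  have hπ : (3 : ℝ) ≤ Real.pi := Real.pi_gt_three.le
  have hs3 : (3 : ℝ) ≤ Real.sqrt |Δ| := by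
    have : (3 : ℝ) = Real.sqrt 9 := by
      rw [show (9:ℝ) = 3^2 by norm_num, Real.sqrt_sq]; norm_num
    rw [this]
    exact Real.sqrt_le_sqrt (by linarith)
  have h9 : (9 : ℝ) ≤ Real.pi * Real.sqrt |Δ| := by nlinarith
  have hexp9 : (2079 : ℝ) < Real.exp 9 := by
    have h1 : (2.7 : ℝ) < Real.exp 1 := by
      have := Real.exp_one_gt_d9; linarith
    have h3 : (2.7 : ℝ) ^ 9 < Real.exp 1 ^ 9 :=
      pow_lt_pow_left₀ h1 (by norm_num) (by norm_num)
    have h2 : Real.exp 1 ^ (9 : ℕ) = Real.exp 9 := by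
      rw [← Real.exp_nat_mul]; norm_num
    norm_num at h3
    linarith
  have ha : 0 < a := by
    have : Real.exp 9 ≤ Real.exp (Real.pi * Real.sqrt |Δ|) := Real.exp_le_exp.mpr h9
    have := hy0
    linarith
  have hc0 : 0 ≤ c := by positivity
  have hc1 : c ≤ 1 := by
    have h45 : (4 : ℝ) ≤ Real.pi * Real.sqrt |Δ| / 2 := by nlinarith
    have : Real.exp 4 ≤ Real.exp (Real.pi * Real.sqrt |Δ| / 2) := Real.exp_le_exp.mpr h45
    have h6 : (6 : ℝ) < Real.exp 4 := by
      have h1 : (2.7 : ℝ) < Real.exp 1 := by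
        have := Real.exp_one_gt_d9; linarith
      have h3 : (2.7 : ℝ) ^ 4 < Real.exp 1 ^ 4 :=
        pow_lt_pow_left₀ h1 (by norm_num) (by norm_num)
      have h2 : Real.exp 1 ^ (4 : ℕ) = Real.exp 4 := by
        rw [← Real.exp_nat_mul]; norm_num
      norm_num at h3
      linarith
    rw [hcc, div_le_one (by linarith)]
    linarith
  -- bound for each i ≠ z
  have hterm : ∀ i ∈ univ.erase z, ‖y i ^ m‖ ≤ c * a ^ m := by
    intro i hi
    rw [Finset.mem_erase] at hi
    have hyc := hyi i hi.1
    rw [norm_pow]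
    calc ‖y i‖ ^ m ≤ (c * a) ^ m := by
          apply pow_le_pow_left₀ (norm_nonneg _) hyc _
      _ = c ^ m * a ^ m := by ring
      _ ≤ c * a ^ m := by
          apply mul_le_mul_of_nonneg_right _ (by positivity)
          exact pow_le_of_le_one hc0 hc1 (by omega)
  have hcardE : ((univ.erase z).card : ℝ) = (k : ℝ) - 1 := by
    rw [Finset.card_erase_of_mem (Finset.mem_univ z), Finset.card_univ, Fintype.card_fin]
    have h1k : 1 ≤ k := by omega
    rw [Nat.cast_sub h1k]; norm_num
  have hT : ‖∑ i ∈ univ.erase z, y i ^ m‖ ≤ ((k : ℝ) - 1) * (c * a ^ m) := by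
    calc ‖∑ i ∈ univ.erase z, y i ^ m‖
        ≤ ∑ i ∈ univ.erase z, ‖y i ^ m‖ := by
          exact norm_sum_le _ _
      _ ≤ ∑ i ∈ univ.erase z, c * a ^ m := Finset.sum_le_sum hterm
      _ = ((univ.erase z).card : ℝ) * (c * a ^ m) := by
          rw [Finset.sum_const, nsmul_eq_mul]
      _ = ((k : ℝ) - 1) * (c * a ^ m) := by rw [hcardE]
  have hsplit : ∑ i, y i ^ m = y z ^ m + ∑ i ∈ univ.erase z, y i ^ m :=
    (Finset.add_sum_erase univ (fun i => y i ^ m) (Finset.mem_univ z)).symm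
  -- (k-1)*c < 1
  have hAc : ((k : ℝ) - 1) * c < 1 := by
    have hA0 : 0 ≤ (1 / Real.pi) * Real.sqrt |Δ| * (2 + Real.log |Δ|) := by
      have : (1 : ℝ) ≤ k - 1 := by
        have : (2 : ℝ) ≤ k := by exact_mod_cast hk
        linarith
      linarith
    have h1 : ((k : ℝ) - 1) * c ≤ (1 / Real.pi) * Real.sqrt |Δ| * (2 + Real.log |Δ|) * c :=
      mul_le_mul_of_nonneg_right hcard hc0
    have h2 : (1 / Real.pi) * Real.sqrt |Δ| * (2 + Real.log |Δ|) * c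
        = 6 * Real.sqrt |Δ| * (2 + Real.log |Δ|) /
          (Real.pi * Real.exp (Real.pi * Real.sqrt |Δ| / 2)) := by
      rw [hcc]
      field_simp
    rw [h2] at h1
    linarith
  have hmain : 0 < ‖∑ i, y i ^ m‖ := by
    have h1 : a ^ m ≤ ‖∑ i, y i ^ m‖
        + ‖∑ i ∈ univ.erase z, y i ^ m‖ := by
      have hS : (∑ i, y i ^ m) - ∑ i ∈ univ.erase z, y i ^ m = y z ^ m := by
        rw [hsplit]; ring
      calc a ^ m = ‖y z ^ m‖ := by rw [norm_pow]
        _ = ‖(∑ i, y i ^ m) - ∑ i ∈ univ.erase z, y i ^ m‖ := by rw [hS]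
        _ ≤ ‖∑ i, y i ^ m‖
            + ‖-(∑ i ∈ univ.erase z, y i ^ m)‖ := by
              rw [sub_eq_add_neg]; exact norm_add_le _ _
        _ = ‖∑ i, y i ^ m‖
            + ‖∑ i ∈ univ.erase z, y i ^ m‖ := by rw [norm_neg]
    have h2 : (1 - ((k : ℝ) - 1) * c) * a ^ m ≤ ‖∑ i, y i ^ m‖ := by
      nlinarith [norm_nonneg (∑ i, y i ^ m)]
    have h3 : 0 < (1 - ((k : ℝ) - 1) * c) * a ^ m := by
      apply mul_pos (by linarith) (by positivity)
    linarith
  refine ⟨hmain, fun h => ?_⟩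
  rw [h] at hmain; simp at hmain
end

section
/- Let n ≥ 1, let Δ be a real number with |Δ| ≥ 3, and let m be a positive integer. Let x_{i,j} (1 ≤ i ≤ n, 1 ≤ j ≤ n+1) be complex numbers and let τ ∈ S_{n+1} be the cycle with τ(i+1) = i for 1 ≤ i ≤ n and τ(1) = n+1. Suppose: (i) |x_{i,τ(i+1)}| = R for all i, where R ≥ 1; (ii) for every σ ∈ S_{n+1} with σ ≠ τ, the product |x_{1,σ(2)} ⋯ x_{n,σ(n+1)}| ≤ (6/exp(π√|Δ|/2))·R^n; and (iii) Σ_{σ ∈ S_{n+1}} sgn(σ)·(x_{1,σ(2)} ⋯ x_{n,σ(n+1)})^m = 0. Then (exp(π√|Δ|/2)/6)^m ≤ (n+1)!. -/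
open Real Finset Equiv

theorem determinant_dominant_bound (n : ℕ) (hn : 1 ≤ n) (Δ : ℝ) (hΔ : 3 ≤ |Δ|)
    (m : ℕ) (hm : 1 ≤ m) (x : Fin n → Fin (n + 1) → ℂ)
    (τ : Equiv.Perm (Fin (n + 1)))
    (hτ : ∀ i : Fin n, τ i.succ = i.castSucc) (hτ0 : τ 0 = Fin.last n)
    (R : ℝ) (hR : 1 ≤ R)
    (hdom : ∀ i : Fin n, ‖x i (τ i.succ)‖ = R)
    (hoth : ∀ σ : Equiv.Perm (Fin (n + 1)), σ ≠ τ →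
      ‖∏ i : Fin n, x i (σ i.succ)‖ ≤
        (6 / Real.exp (Real.pi * Real.sqrt |Δ| / 2)) * R ^ n)
    (hvanish : ∑ σ : Equiv.Perm (Fin (n + 1)),
      ((Equiv.Perm.sign σ : ℤ) : ℂ) * (∏ i : Fin n, x i (σ i.succ)) ^ m = 0) :
    (Real.exp (Real.pi * Real.sqrt |Δ| / 2) / 6) ^ m ≤ (Nat.factorial (n + 1) : ℝ) := by
  set E : ℝ := Real.exp (Real.pi * Real.sqrt |Δ| / 2) with hE
  have hE0 : 0 < E := Real.exp_pos _
  have hR0 : (0:ℝ) < R := lt_of_lt_of_le one_pos hR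
  set f : Equiv.Perm (Fin (n + 1)) → ℂ :=
    fun σ => ((Equiv.Perm.sign σ : ℤ) : ℂ) * (∏ i : Fin n, x i (σ i.succ)) ^ m with hf
  have hsign : ∀ σ : Equiv.Perm (Fin (n + 1)),
      ‖((Equiv.Perm.sign σ : ℤ) : ℂ)‖ = 1 := by
    intro σ
    rcases Int.units_eq_one_or (Equiv.Perm.sign σ) with h | h <;> simp [h]
  have habs : ∀ σ : Equiv.Perm (Fin (n + 1)),
      ‖f σ‖ = ‖∏ i : Fin n, x i (σ i.succ)‖ ^ m := by
    intro σ
    rw [hf, norm_mul, norm_pow, hsign, one_mul]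
  have hPτ : ‖∏ i : Fin n, x i (τ i.succ)‖ = R ^ n := by
    rw [norm_prod]
    simp [hdom]
  have hτeq : f τ = -∑ σ ∈ Finset.univ.erase τ, f σ := by
    have h1 : f τ + ∑ σ ∈ Finset.univ.erase τ, f σ = 0 := by
      rw [Finset.add_sum_erase _ f (Finset.mem_univ τ)]
      exact hvanish
    linear_combination h1
  have hbound : R ^ (n * m) ≤ (Nat.factorial (n + 1) : ℝ) * (R ^ n / E * 6) ^ m := by
    have h1 : ‖f τ‖ = R ^ (n * m) := by
      rw [habs, hPτ, ← pow_mul]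
    rw [← h1, hτeq, norm_neg]
    calc ‖∑ σ ∈ Finset.univ.erase τ, f σ‖
        ≤ ∑ σ ∈ Finset.univ.erase τ, ‖f σ‖ := by
          exact norm_sum_le _ _
      _ ≤ ∑ σ ∈ Finset.univ.erase τ, (R ^ n / E * 6) ^ m := by
          apply Finset.sum_le_sum
          intro σ hσ
          rw [habs]
          apply pow_le_pow_left₀ (norm_nonneg _)
          have := hoth σ (Finset.ne_of_mem_erase hσ)
          calc ‖∏ i : Fin n, x i (σ i.succ)‖
              ≤ 6 / E * R ^ n := this
            _ = R ^ n / E * 6 := by ring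
      _ ≤ (Nat.factorial (n + 1) : ℝ) * (R ^ n / E * 6) ^ m := by
          rw [Finset.sum_const, nsmul_eq_mul]
          apply mul_le_mul_of_nonneg_right
          · have hcard : (Finset.univ.erase τ).card ≤
                Fintype.card (Equiv.Perm (Fin (n + 1))) :=
              Finset.card_le_card (Finset.subset_univ _)
            rw [Fintype.card_perm, Fintype.card_fin] at hcard
            exact_mod_cast hcard
          · positivity
  have hRnm : (0:ℝ) < R ^ (n * m) := by positivity
  have key : (E / 6) ^ m * R ^ (n * m) ≤ (Nat.factorial (n + 1) : ℝ) * R ^ (n * m) := by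
    have h2 : (Nat.factorial (n + 1) : ℝ) * (R ^ n / E * 6) ^ m * (E / 6) ^ m
        = (Nat.factorial (n + 1) : ℝ) * R ^ (n * m) := by
      rw [mul_assoc, ← mul_pow]
      have h3 : R ^ n / E * 6 * (E / 6) = R ^ n := by field_simp
      rw [h3, ← pow_mul]
    calc (E / 6) ^ m * R ^ (n * m)
        ≤ (E / 6) ^ m * ((Nat.factorial (n + 1) : ℝ) * (R ^ n / E * 6) ^ m) := by
          apply mul_le_mul_of_nonneg_left hbound (by positivity)
      _ = (Nat.factorial (n + 1) : ℝ) * R ^ (n * m) := by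
          rw [mul_comm, h2]
  exact le_of_mul_le_mul_right key hRnm
end
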